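/- Let k_z, k_ż, k_i be real numbers with k_z > 0, k_ż > 0, k_i > 0, and k_z·k_ż > k_i. Let w : ℝ → ℝ be a continuous function with w(t) → 0 as t → ∞, and let e₁, e₂, e₃ : ℝ → ℝ satisfy, for every t: e₁'(t) = e₂(t), e₂'(t) = −k_z·e₁(t) − k_ż·e₂(t) − k_i·e₃(t) + w(t), and e₃'(t) = e₁(t) (derivatives in the sense of HasDerivAt). Then e₁(t) → 0, e₂(t) → 0, and e₃(t) → 0 as t → ∞. -/

import Mathlib

open Filter

section OuterLoopAux

open intervalIntegral

private lemma olc_exp_decay_tendsto (a : ℝ) (ha : a < 0) (C : ℝ) :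
    Tendsto (fun t => Real.exp (a*t) * C) atTop (nhds 0) := by
  have h1 : Tendsto (fun t : ℝ => a * t) atTop atBot :=
    (tendsto_const_mul_atBot_of_neg ha).2 tendsto_id
  have h2 := Real.tendsto_exp_atBot.comp h1
  simpa using h2.mul_const C

private lemma olc_aux_int (a : ℝ) (ha : a < 0) (h : ℝ → ℝ) (hc : Continuous h)
    (hpos : ∀ s, 0 ≤ h s) (h0 : Tendsto h atTop (nhds 0)) :
    Tendsto (fun t => Real.exp (a*t) * ∫ s in (0:ℝ)..t, Real.exp (-(a*s)) * h s)
      atTop (nhds 0) := by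
  have hker : Continuous fun s => Real.exp (-(a*s)) * h s :=
    ((Real.continuous_exp.comp (by continuity)).mul hc)
  rw [Metric.tendsto_atTop]
  intro ε hε
  have hεa : (0:ℝ) < ε * (-a) / 4 := by nlinarith
  have hbound : ∀ᶠ s in atTop, h s ≤ ε * (-a) / 4 := by
    filter_upwards [h0.eventually (eventually_le_nhds hεa)] with s hs using hs
  obtain ⟨T, hT⟩ := (hbound.and (eventually_ge_atTop (0:ℝ))).exists_forall_of_atTop
  have hT0 : 0 ≤ T := (hT T le_rfl).2
  set C : ℝ := ∫ s in (0:ℝ)..T, Real.exp (-(a*s)) * h s with hC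
  have hexp := olc_exp_decay_tendsto a ha C
  have hexp2 : ∀ᶠ t in atTop, Real.exp (a*t) * C < ε/2 := by
    have : (0:ℝ) < ε/2 := by linarith
    filter_upwards [hexp.eventually (eventually_lt_nhds this)] with t ht using ht
  obtain ⟨N, hN⟩ := (hexp2.and (eventually_ge_atTop T)).exists_forall_of_atTop
  refine ⟨N, fun t ht => ?_⟩
  obtain ⟨hNexp, hNT⟩ := hN t ht
  have htT : T ≤ t := hNT
  have ht0 : 0 ≤ t := le_trans hT0 htT
  have hsplit : (∫ s in (0:ℝ)..t, Real.exp (-(a*s)) * h s)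
      = C + ∫ s in T..t, Real.exp (-(a*s)) * h s := by
    rw [hC, integral_add_adjacent_intervals (hker.intervalIntegrable 0 T)
      (hker.intervalIntegrable T t)]
  have htail : (∫ s in T..t, Real.exp (-(a*s)) * h s)
      ≤ ∫ s in T..t, Real.exp (-(a*s)) * (ε * (-a) / 4) := by
    apply integral_mono_on htT (hker.intervalIntegrable T t)
      (((by continuity : Continuous fun s:ℝ => Real.exp (-(a*s)) * (ε * (-a) / 4))).intervalIntegrable T t)
    intro s hs
    have := (hT s hs.1).1
    have := Real.exp_pos (-(a*s))
    nlinarith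
  have hint_exp : (∫ s in T..t, Real.exp (-(a*s))) =
      Real.exp (-(a*t)) / (-a) - Real.exp (-(a*T)) / (-a) := by
    have : ∀ s ∈ Set.uIcc T t, HasDerivAt (fun u => Real.exp (-(a*u)) / (-a))
        (Real.exp (-(a*s))) s := by
      intro s _
      have hd : HasDerivAt (fun u : ℝ => -(a*u)) (-a) s := by
        simpa [Pi.neg_def] using ((hasDerivAt_id s).const_mul a).neg
      have := (Real.hasDerivAt_exp (-(a*s))).comp s hd
      have h2 := this.div_const (-a)
      exact h2.congr_deriv (mul_div_cancel_right₀ _ (neg_ne_zero.2 ha.ne))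
    rw [integral_eq_sub_of_hasDerivAt this
      ((Real.continuous_exp.comp (by continuity)).intervalIntegrable T t)]
  have htail2 : (∫ s in T..t, Real.exp (-(a*s)) * (ε * (-a) / 4)) ≤ ε/4 * Real.exp (-(a*t)) := by
    rw [integral_mul_const, hint_exp]
    have h1 : 0 < -a := neg_pos.2 ha
    have h2 : 0 < Real.exp (-(a*T)) := Real.exp_pos _
    rw [div_sub_div_same]
    rw [div_mul_eq_mul_div]
    rw [div_le_iff₀ h1]
    have h3 : 0 < Real.exp (-(a*t)) := Real.exp_pos _
    nlinarith
  have hInonneg : 0 ≤ ∫ s in (0:ℝ)..t, Real.exp (-(a*s)) * h s := by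
    exact integral_nonneg ht0 (fun s _ => mul_nonneg (Real.exp_pos _).le (hpos s))
  have hCnonneg : 0 ≤ C := by
    exact integral_nonneg hT0 (fun s _ => mul_nonneg (Real.exp_pos _).le (hpos s))
  rw [Real.dist_eq]
  have hval : Real.exp (a*t) * (∫ s in (0:ℝ)..t, Real.exp (-(a*s)) * h s)
      ≤ Real.exp (a*t) * C + ε/4 := by
    rw [hsplit, mul_add]
    have hexpt : 0 < Real.exp (a*t) := Real.exp_pos _
    have : Real.exp (a*t) * (∫ s in T..t, Real.exp (-(a*s)) * h s)
        ≤ Real.exp (a*t) * (ε/4 * Real.exp (-(a*t))) := by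
      apply mul_le_mul_of_nonneg_left (le_trans htail htail2) hexpt.le
    have heq : Real.exp (a*t) * (ε/4 * Real.exp (-(a*t))) = ε/4 := by
      rw [show Real.exp (a*t) * (ε/4 * Real.exp (-(a*t)))
        = ε/4 * (Real.exp (a*t) * Real.exp (-(a*t))) from by ring, ← Real.exp_add]
      simp
    linarith
  have habs : |Real.exp (a*t) * (∫ s in (0:ℝ)..t, Real.exp (-(a*s)) * h s) - 0|
      = Real.exp (a*t) * (∫ s in (0:ℝ)..t, Real.exp (-(a*s)) * h s) := by
    rw [sub_zero, abs_of_nonneg (mul_nonneg (Real.exp_pos _).le hInonneg)]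
  rw [habs]
  calc Real.exp (a*t) * (∫ s in (0:ℝ)..t, Real.exp (-(a*s)) * h s)
      ≤ Real.exp (a*t) * C + ε/4 := hval
    _ < ε/2 + ε/4 := by linarith
    _ < ε := by linarith

private lemma olc_decay (l : ℂ) (hl : l.re < 0) (g : ℝ → ℂ) (hgc : Continuous g)
    (hg : Tendsto g atTop (nhds 0)) (x : ℝ → ℂ)
    (hx : ∀ t, HasDerivAt x (l * x t + g t) t) :
    Tendsto x atTop (nhds 0) := by
  have hlin : ∀ t : ℝ, HasDerivAt (fun u : ℝ => -(l * u)) (-l) t := by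
    intro t
    simpa [Pi.neg_def] using ((hasDerivAt_id t).ofReal_comp.const_mul l).neg
  have hE : ∀ t : ℝ, HasDerivAt (fun u : ℝ => Complex.exp (-(l * u)))
      (Complex.exp (-(l * t)) * (-l)) t := fun t => (hlin t).cexp
  set y : ℝ → ℂ := fun t => Complex.exp (-(l * t)) * x t with hy_def
  have hy : ∀ t : ℝ, HasDerivAt y (Complex.exp (-(l * (t:ℂ))) * g t) t := by
    intro t
    have := (hE t).mul (hx t)
    exact this.congr_deriv (by ring)
  have hEc : Continuous fun s : ℝ => Complex.exp (-(l * s)) :=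
    Complex.continuous_exp.comp ((continuous_const.mul Complex.continuous_ofReal).neg)
  have hint : ∀ t : ℝ, y t = y 0 + ∫ s in (0:ℝ)..t, Complex.exp (-(l * s)) * g s := by
    intro t
    have := integral_eq_sub_of_hasDerivAt (f := y)
      (fun s _ => hy s) ((hEc.mul hgc).intervalIntegrable 0 t)
    rw [this]; ring
  have hxy : ∀ t : ℝ, x t = Complex.exp (l * t) * y t := by
    intro t
    rw [hy_def]
    simp only []
    rw [← mul_assoc, ← Complex.exp_add]
    simp
  have hnorm_exp : ∀ t : ℝ, ‖Complex.exp (l * t)‖ = Real.exp (l.re * t) := by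
    intro t
    rw [Complex.norm_exp]
    norm_num [Complex.mul_re]
  have hnorm_exp' : ∀ t : ℝ, ‖Complex.exp (-(l * t))‖ = Real.exp (-(l.re * t)) := by
    intro t
    rw [Complex.norm_exp]
    norm_num [Complex.mul_re]
  have hbound : ∀ t : ℝ, 0 ≤ t → ‖x t‖ ≤ Real.exp (l.re * t) * ‖x 0‖
      + Real.exp (l.re * t) * ∫ s in (0:ℝ)..t, Real.exp (-(l.re * s)) * ‖g s‖ := by
    intro t ht
    rw [hxy t, norm_mul, hnorm_exp, hint t]
    have h1 : ‖y 0 + ∫ s in (0:ℝ)..t, Complex.exp (-(l * s)) * g s‖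
        ≤ ‖y 0‖ + ‖∫ s in (0:ℝ)..t, Complex.exp (-(l * s)) * g s‖ := norm_add_le _ _
    have hy0 : ‖y 0‖ = ‖x 0‖ := by
      rw [hy_def]; simp
    have h2 : ‖∫ s in (0:ℝ)..t, Complex.exp (-(l * s)) * g s‖
        ≤ ∫ s in (0:ℝ)..t, Real.exp (-(l.re * s)) * ‖g s‖ := by
      have := intervalIntegral.norm_integral_le_integral_norm
        (f := fun s : ℝ => Complex.exp (-(l * s)) * g s) (a := 0) (b := t)
        (μ := MeasureTheory.volume) ht
      refine this.trans (le_of_eq (intervalIntegral.integral_congr ?_))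
      intro s _
      simp only [norm_mul, hnorm_exp']
    have h3 : 0 < Real.exp (l.re * t) := Real.exp_pos _
    calc Real.exp (l.re * t) * ‖y 0 + ∫ s in (0:ℝ)..t, Complex.exp (-(l * s)) * g s‖
        ≤ Real.exp (l.re * t) * (‖x 0‖ + ∫ s in (0:ℝ)..t, Real.exp (-(l.re * s)) * ‖g s‖) := by
          apply mul_le_mul_of_nonneg_left _ h3.le
          rw [← hy0]
          exact h1.trans (by linarith)
      _ = _ := by ring
  rw [tendsto_zero_iff_norm_tendsto_zero]
  have hlim : Tendsto (fun t => Real.exp (l.re * t) * ‖x 0‖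
      + Real.exp (l.re * t) * ∫ s in (0:ℝ)..t, Real.exp (-(l.re * s)) * ‖g s‖)
      atTop (nhds 0) := by
    have h1 := olc_exp_decay_tendsto l.re hl ‖x 0‖
    have h2 := olc_aux_int l.re hl (fun s => ‖g s‖) hgc.norm (fun s => norm_nonneg _)
      (tendsto_zero_iff_norm_tendsto_zero.mp hg)
    simpa using h1.add h2
  apply squeeze_zero' (Eventually.of_forall fun t => norm_nonneg _) _ hlim
  filter_upwards [eventually_ge_atTop (0:ℝ)] with t ht
  exact hbound t ht

private lemma olc_quad_roots (p q : ℝ) (hp : 0 < p) (hq : 0 < q) :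
    ∃ μ₁ μ₂ : ℂ, μ₁.re < 0 ∧ μ₂.re < 0 ∧ μ₁ + μ₂ = -(p:ℂ) ∧ μ₁ * μ₂ = (q:ℂ) := by
  rcases le_or_gt (p^2 - 4*q) 0 with hΔ | hΔ
  · refine ⟨(-(p:ℝ)/2 : ℝ) + (Real.sqrt (4*q - p^2)/2 : ℝ) * Complex.I,
           (-(p:ℝ)/2 : ℝ) - (Real.sqrt (4*q - p^2)/2 : ℝ) * Complex.I, ?_, ?_, ?_, ?_⟩
    · simp; linarith
    · simp; linarith
    · push_cast; ring
    · have hs : Real.sqrt (4*q - p^2) ^ 2 = 4*q - p^2 := Real.sq_sqrt (by linarith)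
      have : ((-(p:ℝ)/2 : ℝ) + (Real.sqrt (4*q - p^2)/2 : ℝ) * Complex.I)
          * ((-(p:ℝ)/2 : ℝ) - (Real.sqrt (4*q - p^2)/2 : ℝ) * Complex.I)
          = ((-(p:ℝ)/2)^2 + (Real.sqrt (4*q - p^2)/2)^2 : ℝ) := by
        push_cast
        ring_nf
        rw [Complex.I_sq]
        ring
      rw [this]
      norm_cast
      nlinarith
  · have hΔ' : (0:ℝ) ≤ p^2 - 4*q := hΔ.le
    have hs : Real.sqrt (p^2 - 4*q) ^ 2 = p^2 - 4*q := Real.sq_sqrt hΔ'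
    have hsp : Real.sqrt (p^2 - 4*q) < p := by
      have h1 : p^2 - 4*q < p^2 := by nlinarith
      calc Real.sqrt (p^2 - 4*q) < Real.sqrt (p^2) := Real.sqrt_lt_sqrt hΔ' h1
        _ = p := Real.sqrt_sq hp.le
    have hsnn : 0 ≤ Real.sqrt (p^2 - 4*q) := Real.sqrt_nonneg _
    refine ⟨(((-p + Real.sqrt (p^2 - 4*q))/2 : ℝ) : ℂ),
            (((-p - Real.sqrt (p^2 - 4*q))/2 : ℝ) : ℂ), ?_, ?_, ?_, ?_⟩
    · simp; linarith
    · simp; linarith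
    · push_cast; ring
    · have : ((-p + Real.sqrt (p^2 - 4*q))/2) * ((-p - Real.sqrt (p^2 - 4*q))/2) = q := by
        nlinarith
      norm_cast

end OuterLoopAux

theorem outer_loop_convergence
    (kz kdz ki : ℝ) (hkz : 0 < kz) (hkdz : 0 < kdz) (hki : 0 < ki)
    (hrh : ki < kz * kdz)
    (w : ℝ → ℝ) (hw_cont : Continuous w) (hw : Tendsto w atTop (nhds 0))
    (e₁ e₂ e₃ : ℝ → ℝ)
    (he₁ : ∀ t, HasDerivAt e₁ (e₂ t) t)
    (he₂ : ∀ t, HasDerivAt e₂ (-kz * e₁ t - kdz * e₂ t - ki * e₃ t + w t) t)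
    (he₃ : ∀ t, HasDerivAt e₃ (e₁ t) t) :
    Tendsto e₁ atTop (nhds 0) ∧ Tendsto e₂ atTop (nhds 0) ∧
      Tendsto e₃ atTop (nhds 0) := by
  -- real root r of the characteristic polynomial in (-kdz, 0)
  set f : ℝ → ℝ := fun s => s^3 + kdz*s^2 + kz*s + ki with hf
  have hfcont : Continuous f := by
    rw [hf]
    exact (((continuous_pow 3).add (continuous_const.mul (continuous_pow 2))).add
      (continuous_const.mul continuous_id)).add continuous_const
  have hfc : ContinuousOn f (Set.Icc (-kdz) 0) := hfcont.continuousOn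
  have hfa : f (-kdz) < 0 := by simp only [hf]; ring_nf; nlinarith
  have hfb : 0 < f 0 := by simp [hf, hki]
  have h0mem : (0:ℝ) ∈ Set.Ioo (f (-kdz)) (f 0) := ⟨hfa, hfb⟩
  obtain ⟨r, hrmem, hfr⟩ := intermediate_value_Ioo (by linarith : -kdz ≤ (0:ℝ)) hfc h0mem
  obtain ⟨hr1, hr2⟩ := hrmem
  have hfr' : r^3 + kdz*r^2 + kz*r + ki = 0 := hfr
  -- quadratic factor
  have hP : 0 < kdz + r := by linarith
  have hQ : 0 < r^2 + kdz*r + kz := by nlinarith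
  obtain ⟨μ₁, μ₂, hμ₁, hμ₂, hsum, hprod⟩ := olc_quad_roots (kdz + r) (r^2 + kdz*r + kz) hP hQ
  -- complexified cascade
  set u : ℝ → ℂ := fun t => (e₃ t : ℂ) with hu_def
  set v₁ : ℝ → ℂ := fun t => (e₁ t : ℂ) - μ₂ * e₃ t with hv₁_def
  set v₂ : ℝ → ℂ := fun t => (e₂ t : ℂ) - μ₂ * e₁ t - μ₁ * v₁ t with hv₂_def
  have hcont₁ : Continuous e₁ := by
    rw [continuous_iff_continuousAt]; exact fun t => (he₁ t).continuousAt
  have hcont₂ : Continuous e₂ := by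
    rw [continuous_iff_continuousAt]; exact fun t => (he₂ t).continuousAt
  have hcont₃ : Continuous e₃ := by
    rw [continuous_iff_continuousAt]; exact fun t => (he₃ t).continuousAt
  have hv₁' : ∀ t, HasDerivAt v₁ ((e₂ t : ℂ) - μ₂ * e₁ t) t := by
    intro t
    exact ((he₁ t).ofReal_comp).sub (((he₃ t).ofReal_comp).const_mul μ₂)
  have hv₂' : ∀ t, HasDerivAt v₂ ((r:ℂ) * v₂ t + (w t : ℂ)) t := by
    intro t
    have hD : HasDerivAt v₂
        (((-kz * e₁ t - kdz * e₂ t - ki * e₃ t + w t : ℝ) : ℂ)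
          - μ₂ * e₂ t - μ₁ * ((e₂ t : ℂ) - μ₂ * e₁ t)) t :=
      (((he₂ t).ofReal_comp).sub (((he₁ t).ofReal_comp).const_mul μ₂)).sub
        ((hv₁' t).const_mul μ₁)
    convert hD using 1
    simp only [hv₂_def, hv₁_def]
    have hsum' : μ₁ + μ₂ = -((kdz:ℂ) + (r:ℂ)) := by
      rw [hsum]; push_cast; ring
    have hprod' : μ₁ * μ₂ = (r:ℂ)^2 + (kdz:ℂ)*(r:ℂ) + (kz:ℂ) := by
      rw [hprod]; push_cast; ring
    have hfr'' : (r:ℂ)^3 + (kdz:ℂ)*(r:ℂ)^2 + (kz:ℂ)*(r:ℂ) + (ki:ℂ) = 0 := by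
      have := congrArg (Complex.ofReal) hfr'
      push_cast at this
      convert this using 1 <;> push_cast <;> ring
    push_cast
    linear_combination (-(e₁ t : ℂ) * (r:ℂ) + (e₂ t : ℂ)) * hsum'
      + (-(e₁ t : ℂ) + (r:ℂ) * (e₃ t : ℂ)) * hprod' + (e₃ t : ℂ) * hfr''
  have hwC : Tendsto (fun t => ((w t : ℝ) : ℂ)) atTop (nhds 0) := by
    have := (Complex.continuous_ofReal.tendsto 0).comp hw
    simpa [Function.comp_def] using this
  have hv₂0 : Tendsto v₂ atTop (nhds 0) := by
    apply olc_decay (r:ℂ) (by simpa using hr2) (fun t => ((w t : ℝ):ℂ))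
      (Complex.continuous_ofReal.comp hw_cont) hwC v₂ hv₂'
  have hv₁'' : ∀ t, HasDerivAt v₁ (μ₁ * v₁ t + v₂ t) t := by
    intro t
    convert hv₁' t using 1
    simp only [hv₂_def]
    ring
  have hv₁c : Continuous v₁ := by
    rw [hv₁_def]
    exact (Complex.continuous_ofReal.comp hcont₁).sub
      (continuous_const.mul (Complex.continuous_ofReal.comp hcont₃))
  have hv₂c : Continuous v₂ := by
    rw [hv₂_def]
    exact (((Complex.continuous_ofReal.comp hcont₂).sub
      (continuous_const.mul (Complex.continuous_ofReal.comp hcont₁))).sub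
      (continuous_const.mul hv₁c))
  have hv₁0 : Tendsto v₁ atTop (nhds 0) := olc_decay μ₁ hμ₁ v₂ hv₂c hv₂0 v₁ hv₁''
  have hu' : ∀ t, HasDerivAt u (μ₂ * u t + v₁ t) t := by
    intro t
    have := (he₃ t).ofReal_comp
    convert this using 1
    simp only [hu_def, hv₁_def]
    ring
  have hu0 : Tendsto u atTop (nhds 0) := olc_decay μ₂ hμ₂ v₁ hv₁c hv₁0 u hu'
  -- back to real limits
  have htend : ∀ (φ : ℝ → ℝ), Tendsto (fun t => ((φ t : ℝ) : ℂ)) atTop (nhds 0)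
      → Tendsto φ atTop (nhds 0) := by
    intro φ hφ
    rw [tendsto_zero_iff_norm_tendsto_zero]
    have := tendsto_zero_iff_norm_tendsto_zero.mp hφ
    simpa using this
  have he₃0 : Tendsto e₃ atTop (nhds 0) := htend e₃ hu0
  have he₁C : Tendsto (fun t => ((e₁ t : ℝ) : ℂ)) atTop (nhds 0) := by
    have h := (hv₁0.add (hu0.const_mul μ₂))
    simp only [add_zero, mul_zero] at h
    have heq : (fun t => v₁ t + μ₂ * u t) = fun t => ((e₁ t : ℝ) : ℂ) := by
      funext t
      simp only [hv₁_def, hu_def]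
      ring
    rwa [heq] at h
  have he₁0 : Tendsto e₁ atTop (nhds 0) := htend e₁ he₁C
  have he₂0 : Tendsto e₂ atTop (nhds 0) := by
    apply htend e₂
    have h := (hv₂0.add (he₁C.const_mul μ₂)).add ((hv₁0.const_mul μ₁))
    simp only [add_zero, mul_zero] at h
    have heq : (fun t => v₂ t + μ₂ * ((e₁ t : ℝ):ℂ) + μ₁ * v₁ t)
        = fun t => ((e₂ t : ℝ) : ℂ) := by
      funext t
      simp only [hv₂_def, hv₁_def]
      ring
    rwa [heq] at h
  exact ⟨he₁0, he₂0, he₃0⟩
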